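/- The function k(t) = (exp(t) − 1)(1 − exp(−1/t)) is increasing on [2, ∞) and satisfies k(t) ≥ 2 for all t ≥ 2; equivalently, 2·exp(−t) ≤ (1 − exp(−t))(1 − exp(−1/t)) for all t ≥ 2. -/

import Mathlib

lemma stmt8_deriv (x : ℝ) (hx : x ≠ 0) :
    HasDerivAt (fun t : ℝ => (Real.exp t - 1) * (1 - Real.exp (-(1 / t))))
      (Real.exp x * (1 - Real.exp (-(1 / x))) +
        (Real.exp x - 1) * (-(Real.exp (-(1 / x)) * (x ^ 2)⁻¹))) x := by
  have h1 : HasDerivAt (fun t : ℝ => -(1 / t)) ((x ^ 2)⁻¹) x := by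
    simpa [one_div] using (hasDerivAt_inv hx).fun_neg
  have h2 : HasDerivAt (fun t : ℝ => Real.exp (-(1 / t)))
      (Real.exp (-(1 / x)) * (x ^ 2)⁻¹) x := h1.exp
  have h3 : HasDerivAt (fun t : ℝ => Real.exp t - 1) (Real.exp x) x :=
    (Real.hasDerivAt_exp x).sub_const 1
  have h4 : HasDerivAt (fun t : ℝ => 1 - Real.exp (-(1 / t)))
      (-(Real.exp (-(1 / x)) * (x ^ 2)⁻¹)) x := by
    simpa using (hasDerivAt_const x (1:ℝ)).fun_sub h2
  have := h3.fun_mul h4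
  convert this using 1

lemma stmt8_deriv_nonneg (x : ℝ) (hx : 2 < x) :
    0 ≤ Real.exp x * (1 - Real.exp (-(1 / x))) +
        (Real.exp x - 1) * (-(Real.exp (-(1 / x)) * (x ^ 2)⁻¹)) := by
  have hx0 : 0 < x := by linarith
  set E := Real.exp (-(1 / x)) with hEdef
  have hE : 0 < E := Real.exp_pos _
  have hEx : E * Real.exp (1 / x) = 1 := by
    rw [hEdef, ← Real.exp_add]; simp
  have hle : 1 / x + 1 ≤ Real.exp (1 / x) := Real.add_one_le_exp _
  have hy0 : 0 < 1 / x := by positivity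
  have hy2 : 1 / x ≤ 1 / 2 := by
    rw [div_le_div_iff₀ hx0 (by norm_num)]; linarith
  have key : E * (1 + 1 / x) ≤ 1 := by
    nlinarith [Real.exp_pos (1 / x)]
  have hinv : (x ^ 2)⁻¹ = (1 / x) * (1 / x) := by
    field_simp
  have hexp1 : 1 ≤ Real.exp x := Real.one_le_exp (by linarith)
  rw [hinv]
  -- Need: exp x * (1 - E) ≥ (exp x - 1) * (E * y^2) where y = 1/x, and 1 - E ≥ E*y.
  nlinarith [mul_le_mul_of_nonneg_left key (Real.exp_pos x).le,
    mul_pos hE (Real.exp_pos x), mul_nonneg (mul_nonneg hE.le hy0.le) hy0.le,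
    mul_nonneg (mul_nonneg (mul_nonneg hE.le hy0.le) hy0.le) (Real.exp_pos x).le,
    mul_le_mul_of_nonneg_left key (mul_nonneg hy0.le (Real.exp_pos x).le)]

/-- The function `k(t) = (exp t − 1)(1 − exp(−1/t))` is increasing on `[2, ∞)` and
satisfies `k(t) ≥ 2` for all `t ≥ 2`; equivalently,
`2·exp(−t) ≤ (1 − exp(−t))(1 − exp(−1/t))` for all `t ≥ 2`. -/
theorem stmt_8 :
    MonotoneOn (fun t : ℝ => (Real.exp t - 1) * (1 - Real.exp (-(1 / t))))
      (Set.Ici (2 : ℝ)) ∧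
    (∀ t : ℝ, 2 ≤ t → 2 ≤ (Real.exp t - 1) * (1 - Real.exp (-(1 / t)))) ∧
    ∀ t : ℝ, 2 ≤ t →
      2 * Real.exp (-t) ≤ (1 - Real.exp (-t)) * (1 - Real.exp (-(1 / t))) := by
  have hmono : MonotoneOn (fun t : ℝ => (Real.exp t - 1) * (1 - Real.exp (-(1 / t))))
      (Set.Ici (2 : ℝ)) := by
    have hint : interior (Set.Ici (2:ℝ)) = Set.Ioi 2 := interior_Ici
    apply monotoneOn_of_deriv_nonneg (convex_Ici 2)
    · intro x hx
      exact (stmt8_deriv x (by simp at hx; positivity)).continuousAt.continuousWithinAt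
    · intro x hx
      rw [hint] at hx
      exact (stmt8_deriv x (by simp at hx; positivity)).differentiableAt.differentiableWithinAt
    · intro x hx
      rw [hint] at hx
      rw [(stmt8_deriv x (by simp at hx; positivity)).deriv]
      exact stmt8_deriv_nonneg x hx
  have h2 : ∀ t : ℝ, 2 ≤ t → 2 ≤ (Real.exp t - 1) * (1 - Real.exp (-(1 / t))) := by
    intro t ht
    have hbase : 2 ≤ (Real.exp 2 - 1) * (1 - Real.exp (-(1 / 2 : ℝ))) := by
      have he1 : (2.7182818283 : ℝ) < Real.exp 1 := Real.exp_one_gt_d9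
      have hs : Real.exp (1/2 : ℝ) ^ 2 = Real.exp 1 := by
        rw [← Real.exp_nat_mul]; norm_num
      have hs0 : 0 < Real.exp (1/2 : ℝ) := Real.exp_pos _
      have hs1 : (1.648 : ℝ) < Real.exp (1/2 : ℝ) := by nlinarith
      have hE : Real.exp (-(1/2 : ℝ)) * Real.exp (1/2 : ℝ) = 1 := by
        rw [← Real.exp_add]; simp
      have h2e : Real.exp 2 = Real.exp 1 * Real.exp 1 := by
        rw [← Real.exp_add]; norm_num
      have hEpos : 0 < Real.exp (-(1/2 : ℝ)) := Real.exp_pos _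
      nlinarith [mul_pos hEpos hs0]
    calc (2:ℝ) ≤ (Real.exp 2 - 1) * (1 - Real.exp (-(1 / 2 : ℝ))) := hbase
      _ ≤ (Real.exp t - 1) * (1 - Real.exp (-(1 / t))) :=
        hmono (Set.self_mem_Ici) ht ht
  refine ⟨hmono, h2, fun t ht => ?_⟩
  have h := h2 t ht
  have he : Real.exp (-t) * Real.exp t = 1 := by rw [← Real.exp_add]; simp
  have h3 : Real.exp (-t) * (Real.exp t - 1) = 1 - Real.exp (-t) := by
    rw [mul_sub, he, mul_one]
  calc 2 * Real.exp (-t) = Real.exp (-t) * 2 := by ring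
    _ ≤ Real.exp (-t) * ((Real.exp t - 1) * (1 - Real.exp (-(1 / t)))) :=
        mul_le_mul_of_nonneg_left h (Real.exp_pos _).le
    _ = (Real.exp (-t) * (Real.exp t - 1)) * (1 - Real.exp (-(1 / t))) := by ring
    _ = (1 - Real.exp (-t)) * (1 - Real.exp (-(1 / t))) := by rw [h3]
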